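/- arXiv:2407.00749 — 3 statements merged into one kernel-verified Lean document; each statement's English description precedes it below -/
import Mathlib

section
/- Let Q be a Markov transition kernel on a Polish space X, reversible with respect to a stationary probability measure π, such that the densities h_{δ_x,n} := d(δ_x Q^n)/dπ exist for all x and n. Then for all x, y ∈ X and every n ∈ ℕ, |h_{δ_x,2n}(y) − 1| ≤ ‖h_{δ_x,n} − 1‖_{L²(π)} · ‖h_{δ_y,n} − 1‖_{L²(π)}. -/
open MeasureTheory ProbabilityTheory ENNReal Filter

namespace SpectralProfile

variable {X : Type*} [MeasurableSpace X]

/-- The `k`-step transition kernel `P^k`. -/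
noncomputable def kpow (P : Kernel X X) : ℕ → Kernel X X
  | 0 => Kernel.id
  | (n + 1) => P ∘ₖ (kpow P n)

/-- The distribution `μ P^k` after `k` steps started from `μ`. -/
noncomputable def stepDist (μ : Measure X) (P : Kernel X X) (k : ℕ) : Measure X :=
  μ.bind (kpow P k)

/-- `π` is a stationary distribution for `P`. -/
def IsStationary (π : Measure X) (P : Kernel X X) : Prop :=
  π.bind P = π

/-- `P` is reversible with respect to `π`. -/
def IsReversible (π : Measure X) (P : Kernel X X) : Prop :=
  ∀ A B : Set X, MeasurableSet A → MeasurableSet B →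
    ∫⁻ x in A, P x B ∂π = ∫⁻ x in B, P x A ∂π

/-- `P` is irreducible (with respect to `π`): every set of positive stationary measure
is eventually reachable from every point. -/
def IsIrreducible (π : Measure X) (P : Kernel X X) : Prop :=
  ∀ x : X, ∀ A : Set X, MeasurableSet A → 0 < π A → ∃ n : ℕ, 0 < kpow P n x A

/-- `P` is the exactly half-lazy version of `Pt`:  `P = ½ Pt + ½ I`. -/
def IsHalfLazy (P Pt : Kernel X X) : Prop :=
  ∀ (x : X) (A : Set X), MeasurableSet A →
    P x A = 2⁻¹ * Pt x A + 2⁻¹ * Measure.dirac x A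

/-- Each distribution `Pt x` has a density with respect to `π`. -/
def HasDensities (Pt : Kernel X X) (π : Measure X) : Prop :=
  ∀ x : X, Pt x ≪ π

/-- `μ` is a `β`-warm start with respect to `π`. -/
def IsWarmStart (μ π : Measure X) (β : ℝ) : Prop :=
  ∀ A : Set X, MeasurableSet A → μ A ≤ ENNReal.ofReal β * π A

/-- The `L²` distance `d₂(Q, π)` between a measure `Q` and `π`. -/
noncomputable def L2dist (Q π : Measure X) : ℝ :=
  Real.sqrt (∫ x, ((Q.rnDeriv π x).toReal - 1) ^ 2 ∂π)

/-- The `L²` mixing time `τ₂(ε; μ, P)` from initial distribution `μ`. -/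
noncomputable def mixTime (π : Measure X) (P : Kernel X X) (μ : Measure X) (ε : ℝ) : ℕ :=
  sInf {k : ℕ | L2dist (stepDist μ P k) π ≤ ε}

/-- `⌈k/2⌉` for a natural number `k`. -/
def ceilHalf (k : ℕ) : ℕ := (k + 1) / 2

/-- The quantity `d_{2,δ}(x, P, k)`, valued in `ℝ≥0∞`. -/
noncomputable def d2delta (π : Measure X) (P Pt : Kernel X X) (δ : ℝ) (x : X) (k : ℕ) :
    ℝ≥0∞ :=
  if kpow P (ceilHalf k) x {x} ≤ ENNReal.ofReal δ then
    ENNReal.ofReal (L2dist (stepDist ((Measure.dirac x).bind Pt) P (ceilHalf k)) π + δ)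
  else ⊤

/-- The `δ`-approximate `L²` mixing time `τ_{2,δ}(ε; P)` from a single starting point. -/
noncomputable def mixTimeApprox (π : Measure X) (P Pt : Kernel X X) (δ ε : ℝ) : ℕ :=
  sInf {k : ℕ | (⨆ x : X, d2delta π P Pt δ x k) ≤ ENNReal.ofReal ε}

/-- The Dirichlet form `E(f, f)` of the kernel `P` on `L²(π)`. -/
noncomputable def dirichletForm (π : Measure X) (P : Kernel X X) (f : X → ℝ) : ℝ :=
  (1 / 2) * ∫ x, (∫ y, (f x - f y) ^ 2 ∂(P x)) ∂π

/-- The spectral gap `γ(A)` of `P` for the set `A`. -/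
noncomputable def specGap (π : Measure X) (P : Kernel X X) (A : Set X) : ℝ :=
  sInf {r : ℝ | ∃ f : X → ℝ, MemLp f 2 π ∧ Function.support f ⊆ A ∧ (∀ x, 0 ≤ f x) ∧
    (¬ ∃ c : ℝ, f =ᵐ[π] fun _ => c) ∧ r = dirichletForm π P f / variance f π}

/-- The spectral profile `Γ(v)` of `P`. -/
noncomputable def specProfile (π : Measure X) (P : Kernel X X) (v : ℝ) : ℝ :=
  sInf {r : ℝ | ∃ A : Set X, MeasurableSet A ∧ 0 < π A ∧ π A ≤ ENNReal.ofReal v ∧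
    r = specGap π P A}

/-- The normalized restriction `π|_S` of `π` to `S`. -/
noncomputable def restrictMeasure (π : Measure X) (S : Set X) : Measure X :=
  (π S)⁻¹ • π.restrict S

/-- The eigenfunction expansion assumption (Assumption 2) for the restricted sub-stochastic
kernel `Pt_S` on `L²(π|_S)`: there is an orthonormal basis of eigenfunctions `f i` with
eigenvalues `ev i` decreasing to `0`, `f 0 ≡ 1`, `0 ≤ ev i < 1`, together with the
resulting spectral expansion of the densities of the iterates of `Pt_S`. -/
structure EigenExpansion (π : Measure X) (Pt : Kernel X X) (S : Set X)
    (hS : MeasurableSet S) where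
  f : ℕ → X → ℝ
  ev : ℕ → ℝ
  f_zero : ∀ x, f 0 x = 1
  orthonormal : ∀ i j : ℕ,
    ∫ x, f i x * f j x ∂(restrictMeasure π S) = if i = j then 1 else 0
  ev_nonneg : ∀ i, 0 ≤ ev i
  ev_lt_one : ∀ i, ev i < 1
  ev_anti : Antitone ev
  ev_tendsto : Tendsto ev atTop (nhds 0)
  eigen : ∀ (i : ℕ) (x : X),
    ∫ y, (((Measure.dirac x).bind (Pt.restrict hS)).rnDeriv (restrictMeasure π S) y).toReal
      * f i y ∂(restrictMeasure π S) = ev i * f i x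
  summable : ∀ (ℓ : ℕ), 1 ≤ ℓ → ∀ x y : X,
    Summable fun i : ℕ => |ev i ^ ℓ * f i x * f i y|
  expansion : ∀ (ℓ : ℕ), 1 ≤ ℓ → ∀ x y : X,
    (((Measure.dirac x).bind (kpow (Pt.restrict hS) ℓ)).rnDeriv
        (restrictMeasure π S) y).toReal = ∑' i : ℕ, ev i ^ ℓ * f i x * f i y

end SpectralProfile



namespace SpectralProfile

section Aux

open Set

variable {X : Type*} [MeasurableSpace X]

lemma kpow_zero (P : Kernel X X) : kpow P 0 = Kernel.id := rfl
lemma kpow_succ (P : Kernel X X) (n : ℕ) : kpow P (n + 1) = P ∘ₖ kpow P n := rfl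

instance kpow_isMarkov (P : Kernel X X) [IsMarkovKernel P] (n : ℕ) :
    IsMarkovKernel (kpow P n) := by
  induction n with
  | zero => rw [kpow_zero]; infer_instance
  | succ n ih => rw [kpow_succ]; infer_instance

lemma kpow_add (P : Kernel X X) [IsMarkovKernel P] (m n : ℕ) :
    kpow P (m + n) = kpow P m ∘ₖ kpow P n := by
  induction m with
  | zero => rw [Nat.zero_add, kpow_zero, Kernel.id_comp]
  | succ m ih =>
    have h : m + 1 + n = (m + n) + 1 := by omega
    rw [h, kpow_succ, ih, kpow_succ, Kernel.comp_assoc]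

lemma kpow_one (P : Kernel X X) : kpow P 1 = P := by
  rw [kpow_succ, kpow_zero, Kernel.comp_id]

lemma comp_kpow (P : Kernel X X) [IsMarkovKernel P] (n : ℕ) :
    kpow P n ∘ₖ P = P ∘ₖ kpow P n := by
  calc kpow P n ∘ₖ P = kpow P n ∘ₖ kpow P 1 := by rw [kpow_one]
    _ = kpow P (n + 1) := (kpow_add P n 1).symm
    _ = P ∘ₖ kpow P n := kpow_succ P n

lemma lint_ind_one {A : Set X} (hA : MeasurableSet A) (μ : Measure X) :
    ∫⁻ a, A.indicator (fun _ => (1 : ℝ≥0∞)) a ∂μ = μ A :=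
  lintegral_indicator_one hA

variable {π : Measure X} [IsProbabilityMeasure π]

lemma symm_of_rev {κ : Kernel X X} [IsMarkovKernel κ] (h : IsReversible π κ) :
    (π ⊗ₘ κ).map Prod.swap = π ⊗ₘ κ := by
  haveI : IsProbabilityMeasure ((π ⊗ₘ κ).map Prod.swap) :=
    Measure.isProbabilityMeasure_map measurable_swap.aemeasurable
  refine ext_of_generate_finite _ generateFrom_prod.symm isPiSystem_prod ?_ ?_
  · rintro s ⟨A, hA, B, hB, rfl⟩
    have hA' : MeasurableSet A := hA
    have hB' : MeasurableSet B := hB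
    rw [Measure.map_apply measurable_swap (hA'.prod hB')]
    have hswap : Prod.swap ⁻¹' (A ×ˢ B) = B ×ˢ A := by
      ext p; simp [Set.mem_prod, and_comm]
    rw [hswap, Measure.compProd_apply_prod hB' hA', Measure.compProd_apply_prod hA' hB']
    exact (h A B hA' hB').symm
  · simp

lemma lintegral_lintegral_swap' {κ : Kernel X X} [IsMarkovKernel κ]
    (hsym : (π ⊗ₘ κ).map Prod.swap = π ⊗ₘ κ)
    {F : X × X → ℝ≥0∞} (hF : Measurable F) :
    ∫⁻ x, ∫⁻ y, F (x, y) ∂κ x ∂π = ∫⁻ x, ∫⁻ y, F (y, x) ∂κ x ∂π := by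
  have hF' : Measurable fun p : X × X => F p.swap := hF.comp measurable_swap
  have h1 : ∫⁻ p, F p ∂(π ⊗ₘ κ) = ∫⁻ x, ∫⁻ y, F (x, y) ∂κ x ∂π :=
    Measure.lintegral_compProd hF
  have h2 : ∫⁻ p, F p.swap ∂(π ⊗ₘ κ) = ∫⁻ x, ∫⁻ y, F (y, x) ∂κ x ∂π := by
    rw [Measure.lintegral_compProd hF']; simp [Prod.swap]
  have h3 : ∫⁻ p, F p ∂(π ⊗ₘ κ) = ∫⁻ p, F p.swap ∂(π ⊗ₘ κ) := by
    conv_lhs => rw [← hsym]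
    rw [lintegral_map hF measurable_swap]
  rw [← h1, ← h2, h3]

lemma setLIntegral_eq_indicator (A : Set X) (hA : MeasurableSet A) (G : X → ℝ≥0∞) :
    ∫⁻ z in A, G z ∂π = ∫⁻ z, A.indicator (fun _ => (1 : ℝ≥0∞)) z * G z ∂π := by
  rw [← lintegral_indicator hA]
  congr 1; ext z
  by_cases hz : z ∈ A <;> simp [hz]

lemma rev_kpow (Q : Kernel X X) [IsMarkovKernel Q] (hrev : IsReversible π Q) (n : ℕ) :
    IsReversible π (kpow Q n) := by
  induction n with
  | zero =>
    intro A B hA hB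
    have key : ∀ (A B : Set X), MeasurableSet A → MeasurableSet B →
        ∫⁻ z in A, (kpow Q 0) z B ∂π = π (B ∩ A) := by
      intro A B hA hB
      rw [kpow_zero]
      calc ∫⁻ z in A, (Kernel.id : Kernel X X) z B ∂π
          = ∫⁻ z in A, B.indicator (fun _ => (1 : ℝ≥0∞)) z ∂π := by
            refine setLIntegral_congr_fun hA (fun z _ => ?_)
            rw [Kernel.id_apply, Measure.dirac_apply' z hB]
            rfl
        _ = ∫⁻ z in B, (1 : ℝ≥0∞) ∂(π.restrict A) := lintegral_indicator hB _
        _ = π (B ∩ A) := by rw [setLIntegral_one, Measure.restrict_apply hB]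
    rw [key A B hA hB, key B A hB hA, Set.inter_comm]
  | succ n ih =>
    intro A B hA hB
    have symk := symm_of_rev (π := π) ih
    have symQ := symm_of_rev (π := π) hrev
    have hmB : Measurable fun z => Q z B := Kernel.measurable_coe Q hB
    have hmA : Measurable fun z => (kpow Q n) z A := Kernel.measurable_coe _ hA
    have hiA : Measurable (A.indicator (fun _ => (1 : ℝ≥0∞))) :=
      measurable_const.indicator hA
    have hiB : Measurable (B.indicator (fun _ => (1 : ℝ≥0∞))) :=
      measurable_const.indicator hB
    calc ∫⁻ z in A, (kpow Q (n + 1)) z B ∂π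
        = ∫⁻ z, A.indicator (fun _ => (1:ℝ≥0∞)) z * (kpow Q (n+1)) z B ∂π :=
          setLIntegral_eq_indicator A hA _
      _ = ∫⁻ z, ∫⁻ w, A.indicator (fun _ => (1:ℝ≥0∞)) z * Q w B ∂(kpow Q n) z ∂π := by
          refine lintegral_congr fun z => ?_
          rw [kpow_succ, Kernel.comp_apply' _ _ _ hB, lintegral_const_mul _ hmB]
      _ = ∫⁻ z, ∫⁻ w, A.indicator (fun _ => (1:ℝ≥0∞)) w * Q z B ∂(kpow Q n) z ∂π := by
          exact lintegral_lintegral_swap' symk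
            ((hiA.comp measurable_fst).mul (hmB.comp measurable_snd))
      _ = ∫⁻ z, Q z B * (kpow Q n) z A ∂π := by
          refine lintegral_congr fun z => ?_
          rw [lintegral_mul_const _ hiA, lint_ind_one hA, mul_comm]
      _ = ∫⁻ z, ∫⁻ w, (kpow Q n) z A * B.indicator (fun _ => (1:ℝ≥0∞)) w ∂Q z ∂π := by
          refine lintegral_congr fun z => ?_
          rw [lintegral_const_mul _ hiB, lint_ind_one hB, mul_comm]
      _ = ∫⁻ z, ∫⁻ w, (kpow Q n) w A * B.indicator (fun _ => (1:ℝ≥0∞)) z ∂Q z ∂π := by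
          exact lintegral_lintegral_swap' symQ
            ((hmA.comp measurable_fst).mul (hiB.comp measurable_snd))
      _ = ∫⁻ z, B.indicator (fun _ => (1:ℝ≥0∞)) z * (kpow Q (n+1)) z A ∂π := by
          refine lintegral_congr fun z => ?_
          rw [lintegral_mul_const _ hmA, mul_comm]
          congr 1
          rw [kpow_succ, ← comp_kpow, Kernel.comp_apply' _ _ _ hA]
      _ = ∫⁻ z in B, (kpow Q (n + 1)) z A ∂π := (setLIntegral_eq_indicator B hB _).symm

lemma key_density [MeasurableSingletonClass X] (Q : Kernel X X) [IsMarkovKernel Q]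
    (hrev : IsReversible π Q) (habs : ∀ (z : X) (m : ℕ), kpow Q m z ≪ π)
    (hpos : ∀ z : X, π {z} ≠ 0) (n : ℕ) (a b : X) :
    ((kpow Q (2*n) a).rnDeriv π) b
      = ∫⁻ w, (kpow Q n b).rnDeriv π w * (kpow Q n a).rnDeriv π w ∂π ∧
    ∫⁻ w, (kpow Q n b).rnDeriv π w * (kpow Q n a).rnDeriv π w ∂π ≠ ∞ := by
  have hma : Measurable ((kpow Q n a).rnDeriv π) := Measure.measurable_rnDeriv _ _
  have hmb : Measurable ((kpow Q n b).rnDeriv π) := Measure.measurable_rnDeriv _ _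
  have hwd : ∀ z : X, π.withDensity ((kpow Q n z).rnDeriv π) = kpow Q n z := fun z =>
    Measure.withDensity_rnDeriv_eq _ _ (habs z n)
  have symk := symm_of_rev (π := π) (rev_kpow Q hrev n)
  have hsb : MeasurableSet ({b} : Set X) := measurableSet_singleton b
  have hmsb : Measurable fun z => kpow Q n z {b} := Kernel.measurable_coe _ hsb
  have hib : Measurable (({b} : Set X).indicator (fun _ => (1:ℝ≥0∞))) :=
    measurable_const.indicator hsb
  have e1 : kpow Q (2*n) a {b}
      = (∫⁻ w, (kpow Q n b).rnDeriv π w * (kpow Q n a).rnDeriv π w ∂π) * π {b} := by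
    have h2n : (2*n) = n + n := two_mul n
    calc kpow Q (2*n) a {b} = ∫⁻ z, kpow Q n z {b} ∂(kpow Q n a) := by
          rw [h2n, kpow_add, Kernel.comp_apply' _ _ _ hsb]
      _ = ∫⁻ z, (kpow Q n a).rnDeriv π z * kpow Q n z {b} ∂π := by
          conv_lhs => rw [← hwd a]
          rw [lintegral_withDensity_eq_lintegral_mul _ hma hmsb]
          rfl
      _ = ∫⁻ z, ∫⁻ w, (kpow Q n a).rnDeriv π z
            * ({b} : Set X).indicator (fun _ => (1:ℝ≥0∞)) w ∂kpow Q n z ∂π := by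
          refine lintegral_congr fun z => ?_
          rw [lintegral_const_mul _ hib, lint_ind_one hsb]
      _ = ∫⁻ z, ∫⁻ w, (kpow Q n a).rnDeriv π w
            * ({b} : Set X).indicator (fun _ => (1:ℝ≥0∞)) z ∂kpow Q n z ∂π :=
          lintegral_lintegral_swap' symk ((hma.comp measurable_fst).mul (hib.comp measurable_snd))
      _ = ∫⁻ z, ({b} : Set X).indicator (fun _ => (1:ℝ≥0∞)) z
            * ∫⁻ w, (kpow Q n a).rnDeriv π w ∂kpow Q n z ∂π := by
          refine lintegral_congr fun z => ?_
          rw [lintegral_mul_const _ hma, mul_comm]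
      _ = ∫⁻ z in {b}, (∫⁻ w, (kpow Q n a).rnDeriv π w ∂kpow Q n z) ∂π :=
          (setLIntegral_eq_indicator _ hsb _).symm
      _ = (∫⁻ w, (kpow Q n a).rnDeriv π w ∂kpow Q n b) * π {b} := lintegral_singleton _ b
      _ = (∫⁻ w, (kpow Q n b).rnDeriv π w * (kpow Q n a).rnDeriv π w ∂π) * π {b} := by
          congr 1
          conv_lhs => rw [← hwd b]
          rw [lintegral_withDensity_eq_lintegral_mul _ hmb hma]
          rfl
  have e2 : kpow Q (2*n) a {b} = ((kpow Q (2*n) a).rnDeriv π) b * π {b} := by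
    conv_lhs => rw [← Measure.withDensity_rnDeriv_eq _ _ (habs a (2*n))]
    rw [withDensity_apply _ hsb, lintegral_singleton]
  have hfinb : π {b} ≠ ∞ := measure_ne_top _ _
  have hIfin : (∫⁻ w, (kpow Q n b).rnDeriv π w * (kpow Q n a).rnDeriv π w ∂π) ≠ ∞ := by
    intro hI
    rw [hI, ENNReal.top_mul (hpos b)] at e1
    exact (measure_ne_top (kpow Q (2*n) a) {b}) e1
  have heq : ((kpow Q (2*n) a).rnDeriv π) b
      = ∫⁻ w, (kpow Q n b).rnDeriv π w * (kpow Q n a).rnDeriv π w ∂π := by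
    have h := e2.symm.trans e1
    have h' := congrArg (fun t => t * (π {b})⁻¹) h
    simpa [mul_assoc, ENNReal.mul_inv_cancel (hpos b) hfinb] using h'
  exact ⟨heq, hIfin⟩

end Aux

end SpectralProfile

open SpectralProfile MeasureTheory ProbabilityTheory in
/-- The pointwise Cauchy-Schwarz step in the proof of Proposition 1. -/
theorem stmt6 {X : Type*} [MeasurableSpace X] [TopologicalSpace X] [PolishSpace X]
    [BorelSpace X] (Q : Kernel X X) [IsMarkovKernel Q]
    (π : Measure X) [IsProbabilityMeasure π]
    (hstat : IsStationary π Q) (hrev : IsReversible π Q)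
    (hdens : ∀ (x : X) (n : ℕ), stepDist (Measure.dirac x) Q n ≪ π)
    (x y : X) (n : ℕ) :
    |((stepDist (Measure.dirac x) Q (2 * n)).rnDeriv π y).toReal - 1| ≤
      L2dist (stepDist (Measure.dirac x) Q n) π *
        L2dist (stepDist (Measure.dirac y) Q n) π := by
  have hstep : ∀ (z : X) (m : ℕ), stepDist (Measure.dirac z) Q m = kpow Q m z := fun z m =>
    Measure.dirac_bind (Kernel.measurable _) z
  have habs : ∀ (z : X) (m : ℕ), kpow Q m z ≪ π := fun z m => by
    rw [← hstep z m]; exact hdens z m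
  have hpos : ∀ z : X, π {z} ≠ 0 := by
    intro z h0
    have h1 : kpow Q 0 z {z} = 0 := habs z 0 h0
    rw [kpow_zero, Kernel.id_apply] at h1
    simp at h1
  have main : ∀ a b : X,
      |((kpow Q (2*n) a).rnDeriv π b).toReal - 1| ≤
        Real.sqrt (∫ z, (((kpow Q n a).rnDeriv π z).toReal - 1) ^ 2 ∂π) *
        Real.sqrt (∫ z, (((kpow Q n b).rnDeriv π z).toReal - 1) ^ 2 ∂π) := by
    intro a b
    set h1 : X → ℝ≥0∞ := (kpow Q n a).rnDeriv π with hh1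
    set h2 : X → ℝ≥0∞ := (kpow Q n b).rnDeriv π with hh2
    set f : X → ℝ := fun z => (h1 z).toReal with hfdef
    set g : X → ℝ := fun z => (h2 z).toReal with hgdef
    have hm1 : Measurable h1 := Measure.measurable_rnDeriv _ _
    have hm2 : Measurable h2 := Measure.measurable_rnDeriv _ _
    have hmf : Measurable f := hm1.ennreal_toReal
    have hmg : Measurable g := hm2.ennreal_toReal
    have hone1 : ∫⁻ z, h1 z ∂π = 1 := by
      rw [Measure.lintegral_rnDeriv (habs a n)]; simp
    have hone2 : ∫⁻ z, h2 z ∂π = 1 := by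
      rw [Measure.lintegral_rnDeriv (habs b n)]; simp
    have hK := key_density Q hrev habs hpos n a b
    have hKaa := (key_density Q hrev habs hpos n a a).2
    have hKbb := (key_density Q hrev habs hpos n b b).2
    -- integrability
    have hint_f : Integrable f π :=
      integrable_toReal_of_lintegral_ne_top hm1.aemeasurable (hone1 ▸ one_ne_top)
    have hint_g : Integrable g π :=
      integrable_toReal_of_lintegral_ne_top hm2.aemeasurable (hone2 ▸ one_ne_top)
    have hif : ∫ z, f z ∂π = 1 := by
      rw [hfdef]
      rw [integral_toReal hm1.aemeasurable (ae_lt_top hm1 (hone1 ▸ one_ne_top)), hone1]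
      simp
    have hig : ∫ z, g z ∂π = 1 := by
      rw [hgdef]
      rw [integral_toReal hm2.aemeasurable (ae_lt_top hm2 (hone2 ▸ one_ne_top)), hone2]
      simp
    have hgf_eq : (fun z => g z * f z) = fun z => (h2 z * h1 z).toReal :=
      funext fun z => (ENNReal.toReal_mul).symm
    have hff_eq : (fun z => f z * f z) = fun z => (h1 z * h1 z).toReal :=
      funext fun z => (ENNReal.toReal_mul).symm
    have hgg_eq : (fun z => g z * g z) = fun z => (h2 z * h2 z).toReal :=
      funext fun z => (ENNReal.toReal_mul).symm
    have hint_gf : Integrable (fun z => g z * f z) π := by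
      rw [hgf_eq]
      exact integrable_toReal_of_lintegral_ne_top (hm2.mul hm1).aemeasurable hK.2
    have hint_ff : Integrable (fun z => f z * f z) π := by
      rw [hff_eq]
      exact integrable_toReal_of_lintegral_ne_top (hm1.mul hm1).aemeasurable hKaa
    have hint_gg : Integrable (fun z => g z * g z) π := by
      rw [hgg_eq]
      exact integrable_toReal_of_lintegral_ne_top (hm2.mul hm2).aemeasurable hKbb
    have higf : ∫ z, g z * f z ∂π = ((kpow Q (2*n) a).rnDeriv π b).toReal := by
      rw [hgf_eq, integral_toReal (f := fun z => h2 z * h1 z) (hm2.mul hm1).aemeasurable (ae_lt_top (hm2.mul hm1) hK.2),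
        ← hK.1]
    have hexp : ∫ z, (f z - 1) * (g z - 1) ∂π
        = ((kpow Q (2*n) a).rnDeriv π b).toReal - 1 := by
      have e : (fun z => (f z - 1) * (g z - 1)) = fun z => g z * f z - f z - g z + 1 := by
        funext z; ring
      have I1 : Integrable (fun z => g z * f z - f z) π := hint_gf.sub hint_f
      have I2 : Integrable (fun z => g z * f z - f z - g z) π := I1.sub hint_g
      rw [e, integral_add I2 (integrable_const 1),
        integral_sub I1 hint_g, integral_sub hint_gf hint_f,
        higf, hif, hig, integral_const]
      simp
    -- squares integrable
    have hi2f : Integrable (fun z => (f z - 1) ^ 2) π := by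
      have e : (fun z => (f z - 1) ^ 2) = fun z => f z * f z - f z - f z + 1 := by
        funext z; ring
      rw [e]
      exact ((hint_ff.sub hint_f).sub hint_f).add (integrable_const 1)
    have hi2g : Integrable (fun z => (g z - 1) ^ 2) π := by
      have e : (fun z => (g z - 1) ^ 2) = fun z => g z * g z - g z - g z + 1 := by
        funext z; ring
      rw [e]
      exact ((hint_gg.sub hint_g).sub hint_g).add (integrable_const 1)
    -- Cauchy-Schwarz
    have habs1 : |∫ z, (f z - 1) * (g z - 1) ∂π| ≤ ∫ z, |f z - 1| * |g z - 1| ∂π := by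
      have h := norm_integral_le_integral_norm (μ := π) (fun z => (f z - 1) * (g z - 1))
      simpa [Real.norm_eq_abs, abs_mul] using h
    have hsq : ∀ (u : X → ℝ), Measurable u → Integrable (fun z => (u z - 1)^2) π →
        ∫⁻ z, (ENNReal.ofReal |u z - 1|) ^ (2:ℝ) ∂π
          = ENNReal.ofReal (∫ z, (u z - 1) ^ 2 ∂π) := by
      intro u hmu hiu
      have e : ∀ z, (ENNReal.ofReal |u z - 1|) ^ (2:ℝ) = ENNReal.ofReal ((u z - 1) ^ 2) := by
        intro z
        rw [ENNReal.ofReal_rpow_of_nonneg (abs_nonneg _) (by norm_num)]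
        congr 1
        rw [show (2:ℝ) = ((2:ℕ):ℝ) by norm_num, Real.rpow_natCast, sq_abs]
      rw [lintegral_congr e,
        ← ofReal_integral_eq_lintegral_ofReal hiu (ae_of_all _ fun z => sq_nonneg _)]
    have hF2 := hsq f hmf hi2f
    have hG2 := hsq g hmg hi2g
    have hmF : Measurable fun z => ENNReal.ofReal |f z - 1| :=
      (hmf.sub measurable_const).abs.ennreal_ofReal
    have hmG : Measurable fun z => ENNReal.ofReal |g z - 1| :=
      (hmg.sub measurable_const).abs.ennreal_ofReal
    have holder := ENNReal.lintegral_mul_le_Lp_mul_Lq π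
      (Real.HolderConjugate.two_two : Real.HolderConjugate 2 2) hmF.aemeasurable hmG.aemeasurable
    simp only [Pi.mul_apply] at holder
    have hIeq : ∫ z, |f z - 1| * |g z - 1| ∂π
        = (∫⁻ z, (ENNReal.ofReal |f z - 1|) * (ENNReal.ofReal |g z - 1|) ∂π).toReal := by
      rw [integral_eq_lintegral_of_nonneg_ae (f := fun z => |f z - 1| * |g z - 1|)
        (ae_of_all _ fun z => mul_nonneg (abs_nonneg _) (abs_nonneg _))
        (((hmf.sub measurable_const).abs.mul (hmg.sub measurable_const).abs).aestronglyMeasurable)]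
      congr 1
      exact lintegral_congr fun z => ENNReal.ofReal_mul (abs_nonneg _)
    have hrhs_ne : (∫⁻ z, (ENNReal.ofReal |f z - 1|) ^ (2:ℝ) ∂π) ^ (1/(2:ℝ))
        * (∫⁻ z, (ENNReal.ofReal |g z - 1|) ^ (2:ℝ) ∂π) ^ (1/(2:ℝ)) ≠ ∞ := by
      rw [hF2, hG2]
      exact ENNReal.mul_ne_top
        (ENNReal.rpow_ne_top_of_nonneg (by norm_num) ENNReal.ofReal_ne_top)
        (ENNReal.rpow_ne_top_of_nonneg (by norm_num) ENNReal.ofReal_ne_top)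
    have hfinal : (∫⁻ z, ENNReal.ofReal |f z - 1| * ENNReal.ofReal |g z - 1| ∂π).toReal
        ≤ Real.sqrt (∫ z, (f z - 1) ^ 2 ∂π) * Real.sqrt (∫ z, (g z - 1) ^ 2 ∂π) := by
      refine le_trans (ENNReal.toReal_mono hrhs_ne holder) ?_
      rw [ENNReal.toReal_mul, ← ENNReal.toReal_rpow, ← ENNReal.toReal_rpow, hF2, hG2,
        ENNReal.toReal_ofReal (integral_nonneg fun z => sq_nonneg _),
        ENNReal.toReal_ofReal (integral_nonneg fun z => sq_nonneg _),
        Real.sqrt_eq_rpow, Real.sqrt_eq_rpow]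
    calc |((kpow Q (2*n) a).rnDeriv π b).toReal - 1|
        = |∫ z, (f z - 1) * (g z - 1) ∂π| := by rw [hexp]
      _ ≤ ∫ z, |f z - 1| * |g z - 1| ∂π := habs1
      _ = (∫⁻ z, ENNReal.ofReal |f z - 1| * ENNReal.ofReal |g z - 1| ∂π).toReal := hIeq
      _ ≤ _ := hfinal
  rw [hstep x (2*n), L2dist, L2dist, hstep x n, hstep y n]
  exact main x y
end

section
/- Let P = ½P̃ + ½I be an exactly half-lazy, reversible transition kernel on a Polish space X with stationary probability measure π without atoms (π({x}) = 0 for all x), where each P̃(x,·) has a density with respect to π. Then for all ε ∈ (0,1) and δ ∈ (0,ε), the δ-approximate L² mixing time admits the characterization τ_{2,δ}(ε; P) = inf{ k ∈ ℕ : sup_{x∈X} d₂(δ_x P̃ P^{⌈k/2⌉}, π) ≤ ε − δ and 2^{−⌈k/2⌉} ≤ δ }. -/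
open MeasureTheory ProbabilityTheory ENNReal Filter

open SpectralProfile MeasureTheory in
lemma key {X : Type*} [MeasurableSpace X] [MeasurableSingletonClass X]
    (P Pt : Kernel X X) [IsMarkovKernel P] [IsMarkovKernel Pt]
    (π : Measure X)
    (hlazy : IsHalfLazy P Pt) (hdens : HasDensities Pt π)
    (hatomless : ∀ x : X, π {x} = 0) (m : ℕ) (x : X) :
    kpow P m x {x} = (2 : ℝ≥0∞)⁻¹ ^ m := by
  induction m with
  | zero => simp [kpow, Kernel.id_apply]
  | succ n ih =>
    have hsing : MeasurableSet ({x} : Set X) := measurableSet_singleton x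
    have hstep : kpow P (n+1) x {x} = ∫⁻ y, P y {x} ∂(kpow P n x) := by
      rw [show kpow P (n+1) = P ∘ₖ kpow P n from rfl, Kernel.comp_apply' _ _ _ hsing]
    have hPy : ∀ y : X, P y {x} = 2⁻¹ * Set.indicator {x} (fun _ => (1:ℝ≥0∞)) y := by
      intro y
      rw [hlazy y {x} hsing]
      have h1 : Pt y {x} = 0 := by
        have := hdens y
        exact this (hatomless x)
      rw [h1, Measure.dirac_apply' y hsing]
      simp [Set.indicator]
    rw [hstep]
    simp_rw [hPy]
    rw [lintegral_const_mul _ ((measurable_const.indicator hsing)),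
      lintegral_indicator hsing]
    simp [ih, pow_succ, mul_comm]



open SpectralProfile MeasureTheory ProbabilityTheory in
/-- Equation (14): characterization of the `δ`-approximate `L²` mixing time. -/
theorem stmt10 {X : Type*} [MeasurableSpace X] [TopologicalSpace X] [PolishSpace X]
    [BorelSpace X] (P Pt : Kernel X X) [IsMarkovKernel P] [IsMarkovKernel Pt]
    (π : Measure X) [IsProbabilityMeasure π]
    (hstat : IsStationary π P) (hrev : IsReversible π P)
    (hlazy : IsHalfLazy P Pt) (hdens : HasDensities Pt π)
    (hatomless : ∀ x : X, π {x} = 0)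
    (ε δ : ℝ) (hε : ε ∈ Set.Ioo (0 : ℝ) 1) (hδ : δ ∈ Set.Ioo (0 : ℝ) ε) :
    mixTimeApprox π P Pt δ ε =
      sInf {k : ℕ |
        (⨆ x : X, ENNReal.ofReal
            (L2dist (stepDist ((Measure.dirac x).bind Pt) P (ceilHalf k)) π)) ≤
          ENNReal.ofReal (ε - δ) ∧
        ((2 : ℝ)⁻¹) ^ (ceilHalf k) ≤ δ} := by
  have hne : Nonempty X := by
    by_contra h
    have h0 : π Set.univ = 1 := measure_univ
    rw [Set.univ_eq_empty_iff.mpr (not_nonempty_iff.mp h)] at h0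
    simp at h0
  unfold mixTimeApprox
  congr 1
  ext k
  set m := ceilHalf k with hm
  have hkey : ∀ x : X, kpow P m x {x} = (2:ℝ≥0∞)⁻¹ ^ m :=
    key P Pt π hlazy hdens hatomless m
  have hcond : ∀ x : X, (kpow P m x {x} ≤ ENNReal.ofReal δ) ↔ ((2:ℝ)⁻¹)^m ≤ δ := by
    intro x
    rw [hkey x, show ((2:ℝ≥0∞)⁻¹ ^ m) = ENNReal.ofReal ((2:ℝ)⁻¹ ^ m) by
      rw [ENNReal.ofReal_pow (by norm_num), ENNReal.ofReal_inv_of_pos (by norm_num),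
        ENNReal.ofReal_ofNat]]
    exact ENNReal.ofReal_le_ofReal_iff hδ.1.le
  have hd : ∀ x : X, d2delta π P Pt δ x k =
      if kpow P m x {x} ≤ ENNReal.ofReal δ then
        ENNReal.ofReal (L2dist (stepDist ((Measure.dirac x).bind Pt) P m) π + δ)
      else ⊤ := fun x => rfl
  by_cases hc : ((2:ℝ)⁻¹)^m ≤ δ
  · simp only [Set.mem_setOf_eq, ← hm, hc, and_true]
    have hL2 : ∀ x : X, 0 ≤ L2dist (stepDist ((Measure.dirac x).bind Pt) P m) π :=
      fun x => Real.sqrt_nonneg _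
    have hdd : ∀ x : X, d2delta π P Pt δ x k =
        ENNReal.ofReal (L2dist (stepDist ((Measure.dirac x).bind Pt) P m) π)
          + ENNReal.ofReal δ := by
      intro x
      rw [hd x, if_pos ((hcond x).mpr hc)]
      exact ENNReal.ofReal_add (hL2 x) hδ.1.le
    simp_rw [hdd]
    rw [← ENNReal.iSup_add]
    have hε' : ENNReal.ofReal ε = ENNReal.ofReal (ε - δ) + ENNReal.ofReal δ := by
      rw [← ENNReal.ofReal_add (sub_nonneg.mpr hδ.2.le) hδ.1.le, sub_add_cancel]
    rw [hε', ENNReal.add_le_add_iff_right ENNReal.ofReal_ne_top]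
  · simp only [Set.mem_setOf_eq, ← hm, hc, and_false, iff_false]
    intro h
    have htop : ∀ x : X, d2delta π P Pt δ x k = ⊤ := by
      intro x
      rw [hd x, if_neg (fun hh => hc ((hcond x).mp hh))]
    simp_rw [htop] at h
    rw [iSup_const] at h
    exact (ENNReal.ofReal_ne_top (le_antisymm le_top h)).elim
end

section
/- Let P = ½P̃ + ½I be an exactly half-lazy, reversible transition kernel on a Polish space X with atomless stationary probability measure π, where each P̃(x,·) has a density with respect to π. Then for all ε ∈ (0,1) and δ ∈ (0,ε), τ_{2,δ}(ε; P) ≤ max( 2·sup_{x∈X} τ₂(ε − δ; δ_x P̃, P) , 2·log(1/δ)/log 2 + 1 ). -/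
open MeasureTheory ProbabilityTheory ENNReal Filter

namespace SpectralProfile
variable {X : Type*} [MeasurableSpace X]

section Basic

variable (P : Kernel X X)

lemma measurable_kpow (k : ℕ) : Measurable ⇑(kpow P k) := (kpow P k).measurable

lemma isProb_bind (μ : Measure X) [IsProbabilityMeasure μ] (κ : Kernel X X) [IsMarkovKernel κ] :
    IsProbabilityMeasure (μ.bind ⇑κ) := by
  constructor
  rw [Measure.bind_apply MeasurableSet.univ κ.measurable.aemeasurable]
  simp

lemma stepDist_zero (μ : Measure X) : stepDist μ P 0 = μ := by
  have : ⇑(kpow P 0) = Measure.dirac := by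
    funext a; simp [kpow, Kernel.id_apply]
  rw [stepDist, this, Measure.bind_dirac]

lemma stepDist_succ (μ : Measure X) (k : ℕ) :
    stepDist μ P (k + 1) = (stepDist μ P k).bind ⇑P := by
  rw [stepDist, stepDist]
  have : ⇑(kpow P (k+1)) = fun a => ((kpow P k) a).bind ⇑P := by
    funext a; simp [kpow, Kernel.comp_apply]
  rw [this, ← Measure.bind_bind (measurable_kpow P k).aemeasurable P.measurable.aemeasurable]

instance instMarkovKpow [IsMarkovKernel P] (k : ℕ) : IsMarkovKernel (kpow P k) := by
  induction k with
  | zero => exact (by unfold kpow; infer_instance)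
  | succ n ih => exact (by unfold kpow; infer_instance)

lemma stepDist_prob (μ : Measure X) [IsProbabilityMeasure μ] [IsMarkovKernel P] (k : ℕ) :
    IsProbabilityMeasure (stepDist μ P k) :=
  isProb_bind μ (kpow P k)

lemma absCont_bind {π : Measure X} (hstat : IsStationary π P) {ν : Measure X}
    (hν : ν ≪ π) : ν.bind ⇑P ≪ π := by
  intro A hA
  have hmA : MeasurableSet (toMeasurable π A) := measurableSet_toMeasurable π A
  have hπA : π (toMeasurable π A) = 0 := by rwa [measure_toMeasurable]
  have h0 : ∫⁻ x, P x (toMeasurable π A) ∂π = 0 := by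
    rw [← Measure.bind_apply hmA P.measurable.aemeasurable, hstat, hπA]
  have hae : (fun x => P x (toMeasurable π A)) =ᵐ[π] 0 :=
    (lintegral_eq_zero_iff (P.measurable_coe hmA)).mp h0
  have hae' : (fun x => P x (toMeasurable π A)) =ᵐ[ν] 0 := hν.ae_eq hae
  have : (ν.bind ⇑P) (toMeasurable π A) = 0 := by
    rw [Measure.bind_apply hmA P.measurable.aemeasurable, lintegral_congr_ae hae']; simp
  exact le_antisymm (le_trans (measure_mono (subset_toMeasurable π A)) this.le) zero_le

lemma stepDist_ac {π : Measure X} (hstat : IsStationary π P) {μ : Measure X}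
    (hμ : μ ≪ π) (k : ℕ) : stepDist μ P k ≪ π := by
  induction k with
  | zero => rwa [stepDist_zero]
  | succ n ih => rw [stepDist_succ]; exact absCont_bind P hstat ih

end Basic
section Core

variable {π : Measure X} {P : Kernel X X}

/-- The squared L² "distance" as a lower integral. -/
noncomputable def Dfun (π ν : Measure X) : ℝ≥0∞ :=
  ∫⁻ x, ENNReal.ofReal (((ν.rnDeriv π x).toReal - 1) ^ 2) ∂π

lemma L2dist_eq_sqrt_Dfun (ν : Measure X) : L2dist ν π = Real.sqrt (Dfun π ν).toReal := by
  rw [L2dist, Dfun, integral_eq_lintegral_of_nonneg_ae (f := fun x => ((ν.rnDeriv π x).toReal - 1) ^ 2)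
    (Eventually.of_forall fun x => sq_nonneg _)
    (((Measure.measurable_rnDeriv ν π).ennreal_toReal.sub measurable_const).pow_const
      2).aestronglyMeasurable]

lemma L2dist_nonneg (ν : Measure X) : 0 ≤ L2dist ν π := Real.sqrt_nonneg _

lemma rev_lintegral [IsMarkovKernel P] (hrev : IsReversible π P) {A : Set X} (hA : MeasurableSet A)
    {g : X → ℝ≥0∞} (hg : Measurable g) :
    ∫⁻ x, g x * P x A ∂π = ∫⁻ x in A, ∫⁻ y, g y ∂P x ∂π := by
  refine Measurable.ennreal_induction
    (motive := fun g => ∫⁻ x, g x * P x A ∂π = ∫⁻ x in A, ∫⁻ y, g y ∂P x ∂π) ?_ ?_ ?_ hg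
  · intro c s hs
    have h1 : (fun x => s.indicator (fun _ => c) x * P x A)
        = s.indicator (fun x => c * P x A) := by
      funext x; by_cases hx : x ∈ s <;> simp [hx]
    have h2 : ∀ x : X, ∫⁻ y, s.indicator (fun _ => c) y ∂P x = c * P x s := fun x =>
      lintegral_indicator_const hs c
    rw [h1, lintegral_indicator hs, lintegral_const_mul c (P.measurable_coe hA),
      hrev s A hs hA]
    simp_rw [h2]
    rw [lintegral_const_mul c (P.measurable_coe hs)]
  · intro f g _ hf hgm ihf ihg
    have hfA : Measurable fun x => f x * P x A := hf.mul (P.measurable_coe hA)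
    have h1 : ∫⁻ x, (f + g) x * P x A ∂π
        = ∫⁻ x, f x * P x A ∂π + ∫⁻ x, g x * P x A ∂π := by
      simp_rw [Pi.add_apply, add_mul]
      exact lintegral_add_left hfA _
    have h2 : ∀ x : X, ∫⁻ y, (f + g) y ∂P x = (∫⁻ y, f y ∂P x) + ∫⁻ y, g y ∂P x := by
      intro x; simp_rw [Pi.add_apply]; exact lintegral_add_left hf _
    rw [h1, ihf, ihg]
    simp_rw [h2]
    exact (lintegral_add_left (hf.lintegral_kernel (κ := P)) _).symm
  · intro f hf hmono ihf
    have h1 : ∫⁻ x, (⨆ n, f n x) * P x A ∂π = ⨆ n, ∫⁻ x, f n x * P x A ∂π := by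
      simp_rw [ENNReal.iSup_mul]
      exact lintegral_iSup (fun n => (hf n).mul (P.measurable_coe hA))
        (fun i j hij x => mul_le_mul_left (hmono hij x) _)
    have h2 : ∀ x : X, ∫⁻ y, ⨆ n, f n y ∂P x = ⨆ n, ∫⁻ y, f n y ∂P x := fun x =>
      lintegral_iSup hf hmono
    rw [h1]
    simp_rw [ihf, h2]
    exact (lintegral_iSup (fun n => (hf n).lintegral_kernel (κ := P))
      (fun i j hij x => lintegral_mono fun y => hmono hij y)).symm

lemma bind_eq_withDensity [IsMarkovKernel P] (hrev : IsReversible π P) {ν : Measure X}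
    [ν.HaveLebesgueDecomposition π] (hν : ν ≪ π) :
    ν.bind ⇑P = π.withDensity (fun x => ∫⁻ y, ν.rnDeriv π y ∂P x) := by
  set g := ν.rnDeriv π with hgdef
  have hgm : Measurable g := Measure.measurable_rnDeriv ν π
  ext A hA
  rw [Measure.bind_apply hA P.measurable.aemeasurable, withDensity_apply _ hA]
  calc ∫⁻ x, P x A ∂ν = ∫⁻ x, P x A ∂(π.withDensity g) := by
        rw [Measure.withDensity_rnDeriv_eq ν π hν]
    _ = ∫⁻ x, (g * fun x => P x A) x ∂π :=
        lintegral_withDensity_eq_lintegral_mul π hgm (P.measurable_coe hA)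
    _ = ∫⁻ x in A, ∫⁻ y, g y ∂P x ∂π := rev_lintegral hrev hA hgm

lemma jensen_pointwise (ν₀ : Measure X) [IsProbabilityMeasure ν₀] {g : X → ℝ≥0∞}
    (hg : Measurable g) (hfin : ∀ᵐ y ∂ν₀, g y < ⊤) :
    ENNReal.ofReal (((∫⁻ y, g y ∂ν₀).toReal - 1) ^ 2)
      ≤ ∫⁻ y, ENNReal.ofReal (((g y).toReal - 1) ^ 2) ∂ν₀ := by
  by_cases hI : ∫⁻ y, ENNReal.ofReal (((g y).toReal - 1) ^ 2) ∂ν₀ = ⊤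
  · rw [hI]; exact le_top
  · set h : X → ℝ := fun y => (g y).toReal - 1 with hhdef
    have hhm : Measurable h := hg.ennreal_toReal.sub measurable_const
    have hsq_int : Integrable (fun y => h y ^ 2) ν₀ := by
      refine ⟨((hhm.pow_const 2).aestronglyMeasurable), ?_⟩
      rw [hasFiniteIntegral_iff_ofReal (Eventually.of_forall fun y => sq_nonneg _)]
      exact lt_top_iff_ne_top.2 hI
    have hMem : MemLp h 2 ν₀ :=
      (memLp_two_iff_integrable_sq hhm.aestronglyMeasurable).2 hsq_int
    have hh1 : Integrable h ν₀ := hMem.integrable one_le_two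
    have hgt_int : Integrable (fun y => (g y).toReal) ν₀ := by
      have : (fun y => (g y).toReal) = fun y => h y + 1 := by
        funext y; simp [hhdef]
      rw [this]
      exact hh1.add (integrable_const 1)
    have hEg : ∫⁻ y, g y ∂ν₀ = ∫⁻ y, ENNReal.ofReal ((g y).toReal) ∂ν₀ :=
      lintegral_congr_ae (hfin.mono fun y hy => (ENNReal.ofReal_toReal hy.ne).symm)
    have hEfin : ∫⁻ y, g y ∂ν₀ ≠ ⊤ := by
      rw [hEg]
      exact ((hasFiniteIntegral_iff_ofReal
        (Eventually.of_forall fun y => ENNReal.toReal_nonneg)).1 hgt_int.2).ne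
    have htoReal : (∫⁻ y, g y ∂ν₀).toReal = ∫ y, (g y).toReal ∂ν₀ := by
      rw [integral_eq_lintegral_of_nonneg_ae
        (Eventually.of_forall fun y => ENNReal.toReal_nonneg)
        hg.ennreal_toReal.aestronglyMeasurable, ← hEg]
    have hInth : ∫ y, h y ∂ν₀ = (∫⁻ y, g y ∂ν₀).toReal - 1 := by
      rw [htoReal, hhdef]
      rw [integral_sub hgt_int (integrable_const 1), integral_const]
      simp
    have hkey : (∫ y, h y ∂ν₀) ^ 2 ≤ ∫ y, h y ^ 2 ∂ν₀ := by
      have hv := variance_nonneg h ν₀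
      have hv' := variance_eq_sub hMem
      simp only [Pi.pow_apply] at hv'
      linarith
    calc ENNReal.ofReal (((∫⁻ y, g y ∂ν₀).toReal - 1) ^ 2)
        = ENNReal.ofReal ((∫ y, h y ∂ν₀) ^ 2) := by rw [hInth]
      _ ≤ ENNReal.ofReal (∫ y, h y ^ 2 ∂ν₀) := ENNReal.ofReal_le_ofReal hkey
      _ = ∫⁻ y, ENNReal.ofReal (h y ^ 2) ∂ν₀ := by
          rw [integral_eq_lintegral_of_nonneg_ae (Eventually.of_forall fun y => sq_nonneg _)
            ((hhm.pow_const 2).aestronglyMeasurable), ENNReal.ofReal_toReal hI]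

lemma Dfun_bind_le [IsProbabilityMeasure π] [IsMarkovKernel P]
    (hstat : IsStationary π P) (hrev : IsReversible π P) {ν : Measure X}
    [IsFiniteMeasure ν] (hν : ν ≪ π) :
    Dfun π (ν.bind ⇑P) ≤ Dfun π ν := by
  set g := ν.rnDeriv π with hgdef
  have hgm : Measurable g := Measure.measurable_rnDeriv ν π
  have hGm : Measurable fun x => ∫⁻ y, g y ∂P x := hgm.lintegral_kernel (κ := P)
  have hrd : (ν.bind ⇑P).rnDeriv π =ᵐ[π] fun x => ∫⁻ y, g y ∂P x := by
    rw [bind_eq_withDensity hrev hν]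
    exact Measure.rnDeriv_withDensity π hGm
  set E : Set X := {y | ¬ g y < ⊤} with hEdef
  have hEmeas : MeasurableSet E := (hgm (measurableSet_singleton ⊤)).congr (by
    ext y; simp [hEdef, lt_top_iff_ne_top])
  have hπE : π E = 0 := by
    have := Measure.rnDeriv_lt_top ν π
    rwa [ae_iff] at this
  have hPE0 : ∀ᵐ x ∂π, P x E = 0 := by
    have h0 : ∫⁻ x, P x E ∂π = 0 := by
      rw [← Measure.bind_apply hEmeas P.measurable.aemeasurable, hstat, hπE]
    have := (lintegral_eq_zero_iff (P.measurable_coe hEmeas)).mp h0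
    filter_upwards [this] with x hx using hx
  have hjen : ∀ᵐ x ∂π, ENNReal.ofReal (((∫⁻ y, g y ∂P x).toReal - 1) ^ 2)
      ≤ ∫⁻ y, ENNReal.ofReal (((g y).toReal - 1) ^ 2) ∂P x := by
    filter_upwards [hPE0] with x hx
    refine jensen_pointwise (P x) hgm ?_
    rw [ae_iff]
    simpa [hEdef] using hx
  have hFm : Measurable fun y => ENNReal.ofReal (((g y).toReal - 1) ^ 2) :=
    ((hgm.ennreal_toReal.sub measurable_const).pow_const 2).ennreal_ofReal
  calc Dfun π (ν.bind ⇑P)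
      = ∫⁻ x, ENNReal.ofReal (((∫⁻ y, g y ∂P x).toReal - 1) ^ 2) ∂π := by
        refine lintegral_congr_ae (hrd.mono fun x hx => ?_)
        dsimp only at hx ⊢
        rw [hx]
    _ ≤ ∫⁻ x, ∫⁻ y, ENNReal.ofReal (((g y).toReal - 1) ^ 2) ∂P x ∂π :=
        lintegral_mono_ae hjen
    _ = ∫⁻ y, ENNReal.ofReal (((g y).toReal - 1) ^ 2) ∂(π.bind ⇑P) :=
        (Measure.lintegral_bind P.measurable.aemeasurable hFm.aemeasurable).symm
    _ = Dfun π ν := by rw [hstat, Dfun]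

end Core
section Absorb

variable {π : Measure X} {P Pt : Kernel X X}

lemma lintegral_top_mono_aux [IsProbabilityMeasure π] {F G : X → ℝ≥0∞} {c d : ℝ≥0∞}
    (hc : c ≠ ⊤) (hd : d ≠ ⊤) (hG : Measurable G)
    (h : ∀ᵐ x ∂π, F x ≤ c * G x + d) (hF : ∫⁻ x, F x ∂π = ⊤) :
    ∫⁻ x, G x ∂π = ⊤ := by
  by_contra hne
  have hle := lintegral_mono_ae h
  rw [hF, lintegral_add_right _ measurable_const, lintegral_const_mul c hG,
    lintegral_const, measure_univ, mul_one] at hle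
  exact absurd hle (by
    simp only [top_le_iff]
    exact (ENNReal.add_ne_top.2 ⟨ENNReal.mul_ne_top hc hne, hd⟩))

/-- `∫⁻ ofReal ((t-1)^2) = ⊤ ↔ ∫⁻ ofReal (t^2) = ⊤` for a probability `π`. -/
lemma sq_top_iff_sub_one_sq_top [IsProbabilityMeasure π] {t : X → ℝ} (ht : Measurable t) :
    (∫⁻ x, ENNReal.ofReal ((t x - 1) ^ 2) ∂π = ⊤)
      ↔ ∫⁻ x, ENNReal.ofReal (t x ^ 2) ∂π = ⊤ := by
  have key : ∀ (u v : X → ℝ), (∀ x, u x ^ 2 ≤ 2 * v x ^ 2 + 2) →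
      Measurable v →
      (∫⁻ x, ENNReal.ofReal (u x ^ 2) ∂π = ⊤) → ∫⁻ x, ENNReal.ofReal (v x ^ 2) ∂π = ⊤ := by
    intro u v huv hv htop
    refine lintegral_top_mono_aux (c := 2) (d := 2) (by norm_num) (by norm_num)
      ((hv.pow_const 2).ennreal_ofReal) (Eventually.of_forall fun x => ?_) htop
    calc ENNReal.ofReal (u x ^ 2) ≤ ENNReal.ofReal (2 * v x ^ 2 + 2) :=
          ENNReal.ofReal_le_ofReal (huv x)
      _ = 2 * ENNReal.ofReal (v x ^ 2) + 2 := by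
          rw [ENNReal.ofReal_add (by positivity) (by norm_num),
            ENNReal.ofReal_mul (by norm_num)]
          norm_num
  constructor
  · exact key (fun x => t x - 1) t (fun x => by nlinarith [sq_nonneg (t x + 1)]) ht
  · exact key t (fun x => t x - 1) (fun x => by nlinarith [sq_nonneg (t x - 2)])
      (ht.sub measurable_const)

lemma half_le_bind [IsMarkovKernel P] (hlazy : IsHalfLazy P Pt) (ν : Measure X) :
    (2⁻¹ : NNReal) • ν ≤ ν.bind ⇑P := by
  refine Measure.le_iff.2 fun s hs => ?_
  rw [Measure.bind_apply hs P.measurable.aemeasurable, Measure.smul_apply]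
  have hpt : ∀ x : X, ((2⁻¹ : NNReal) : ℝ≥0∞) * s.indicator 1 x ≤ P x s := by
    intro x
    rw [hlazy x s hs, Measure.dirac_apply' x hs]
    have hco : ((2⁻¹ : NNReal) : ℝ≥0∞) = 2⁻¹ := by
      simp
    rw [hco]
    exact le_add_self
  calc ((2⁻¹ : NNReal) : ℝ≥0∞) • ν s
      = ∫⁻ x, ((2⁻¹ : NNReal) : ℝ≥0∞) * s.indicator 1 x ∂ν := by
        rw [lintegral_const_mul _ (measurable_one.indicator hs), lintegral_indicator_one hs,
          smul_eq_mul]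
    _ ≤ ∫⁻ x, P x s ∂ν := lintegral_mono hpt

lemma Dfun_bind_top [IsProbabilityMeasure π] [IsMarkovKernel P] {ν : Measure X}
    [IsProbabilityMeasure ν] (hlazy : IsHalfLazy P Pt) (hD : Dfun π ν = ⊤) :
    Dfun π (ν.bind ⇑P) = ⊤ := by
  haveI : IsProbabilityMeasure (ν.bind ⇑P) := isProb_bind ν P
  have hle : (2⁻¹ : NNReal) • ν ≤ ν.bind ⇑P := half_le_bind hlazy ν
  have hsum : (ν.bind ⇑P - (2⁻¹ : NNReal) • ν) + (2⁻¹ : NNReal) • ν = ν.bind ⇑P :=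
    Measure.sub_add_cancel_of_le hle
  have hg' : ∀ᵐ x ∂π, ((2⁻¹ : NNReal) : ℝ≥0∞) * ν.rnDeriv π x ≤ (ν.bind ⇑P).rnDeriv π x := by
    have h1 := Measure.rnDeriv_add (ν.bind ⇑P - (2⁻¹ : NNReal) • ν) ((2⁻¹ : NNReal) • ν) π
    rw [hsum] at h1
    have h2 := Measure.rnDeriv_smul_left ν π (2⁻¹ : NNReal)
    filter_upwards [h1, h2] with x hx1 hx2
    rw [hx1]
    calc ((2⁻¹ : NNReal) : ℝ≥0∞) * ν.rnDeriv π x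
        = ((2⁻¹ : NNReal) • ν.rnDeriv π) x := by
          rw [Pi.smul_apply]; rfl
      _ = ((2⁻¹ : NNReal) • ν).rnDeriv π x := hx2.symm
      _ ≤ _ := le_add_self
  -- pass to toReal densities
  set t : X → ℝ := fun x => (ν.rnDeriv π x).toReal with htdef
  set t' : X → ℝ := fun x => ((ν.bind ⇑P).rnDeriv π x).toReal with ht'def
  have htm : Measurable t := (Measure.measurable_rnDeriv ν π).ennreal_toReal
  have ht'm : Measurable t' := (Measure.measurable_rnDeriv _ π).ennreal_toReal
  have hTν : ∫⁻ x, ENNReal.ofReal (t x ^ 2) ∂π = ⊤ :=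
    (sq_top_iff_sub_one_sq_top htm).1 hD
  have hptwise : ∀ᵐ x ∂π, t x ≤ 2 * t' x := by
    filter_upwards [hg', Measure.rnDeriv_lt_top (ν.bind ⇑P) π] with x hx hfin
    have h3 : (((2⁻¹ : NNReal) : ℝ≥0∞) * ν.rnDeriv π x).toReal ≤ t' x :=
      ENNReal.toReal_mono hfin.ne hx
    rw [ENNReal.toReal_mul] at h3
    have : ((2⁻¹ : NNReal) : ℝ≥0∞).toReal = 2⁻¹ := by simp
    rw [this] at h3
    simp only [htdef]
    linarith
  have hT' : ∫⁻ x, ENNReal.ofReal (t' x ^ 2) ∂π = ⊤ := by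
    refine lintegral_top_mono_aux (c := 4) (d := 0) (by norm_num) (by norm_num)
      ((ht'm.pow_const 2).ennreal_ofReal) ?_ hTν
    filter_upwards [hptwise] with x hx
    have h4 : t x ^ 2 ≤ 4 * t' x ^ 2 := by nlinarith [ENNReal.toReal_nonneg (a := ν.rnDeriv π x), ENNReal.toReal_nonneg (a := (ν.bind ⇑P).rnDeriv π x)]
    calc ENNReal.ofReal (t x ^ 2) ≤ ENNReal.ofReal (4 * t' x ^ 2) :=
          ENNReal.ofReal_le_ofReal h4
      _ = 4 * ENNReal.ofReal (t' x ^ 2) := by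
          rw [ENNReal.ofReal_mul (by norm_num)]; norm_num
      _ ≤ 4 * ENNReal.ofReal (t' x ^ 2) + 0 := by rw [add_zero]
  exact (sq_top_iff_sub_one_sq_top ht'm).2 hT'

end Absorb

section Steps

variable {π : Measure X} {P Pt : Kernel X X}

lemma L2dist_bind_le [IsProbabilityMeasure π] [IsMarkovKernel P]
    (hstat : IsStationary π P) (hrev : IsReversible π P) (hlazy : IsHalfLazy P Pt)
    {ν : Measure X} [IsProbabilityMeasure ν] (hν : ν ≪ π) {c : ℝ} (hc : 0 ≤ c)
    (h : L2dist ν π ≤ c) : L2dist (ν.bind ⇑P) π ≤ c := by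
  by_cases hD : Dfun π ν = ⊤
  · have htop : Dfun π (ν.bind ⇑P) = ⊤ := Dfun_bind_top hlazy hD
    rw [L2dist_eq_sqrt_Dfun, htop]
    simpa using hc
  · rw [L2dist_eq_sqrt_Dfun] at h ⊢
    have h1 : (Dfun π ν).toReal ≤ c ^ 2 := by
      nlinarith [Real.sq_sqrt (ENNReal.toReal_nonneg (a := Dfun π ν)),
        Real.sqrt_nonneg (Dfun π ν).toReal]
    have h2 : Dfun π ν ≤ ENNReal.ofReal (c ^ 2) :=
      (ENNReal.le_ofReal_iff_toReal_le hD (by positivity)).2 h1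
    have h3 : Dfun π (ν.bind ⇑P) ≤ ENNReal.ofReal (c ^ 2) :=
      le_trans (Dfun_bind_le hstat hrev hν) h2
    have h4 : (Dfun π (ν.bind ⇑P)).toReal ≤ c ^ 2 :=
      ENNReal.toReal_le_of_le_ofReal (by positivity) h3
    calc Real.sqrt (Dfun π (ν.bind ⇑P)).toReal ≤ Real.sqrt (c ^ 2) :=
          Real.sqrt_le_sqrt h4
      _ = c := Real.sqrt_sq hc

lemma L2dist_stepDist_mono [IsProbabilityMeasure π] [IsMarkovKernel P]
    (hstat : IsStationary π P) (hrev : IsReversible π P) (hlazy : IsHalfLazy P Pt)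
    {μ : Measure X} [IsProbabilityMeasure μ] (hμ : μ ≪ π) {c : ℝ} (hc : 0 ≤ c)
    {k m : ℕ} (hkm : k ≤ m) (h : L2dist (stepDist μ P k) π ≤ c) :
    L2dist (stepDist μ P m) π ≤ c := by
  induction m, hkm using Nat.le_induction with
  | base => exact h
  | succ n hn ih =>
    rw [stepDist_succ]
    haveI : IsProbabilityMeasure (stepDist μ P n) := stepDist_prob P μ n
    exact L2dist_bind_le hstat hrev hlazy (stepDist_ac P hstat hμ n) hc ih

end Steps

section Atom

variable {π : Measure X} {P Pt : Kernel X X}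

lemma bind_singleton_eq [IsMarkovKernel P] (hlazy : IsHalfLazy P Pt)
    (hdens : HasDensities Pt π) {x : X} (hπx : π {x} = 0) (hx : MeasurableSet {x})
    (ν : Measure X) : (ν.bind ⇑P) {x} = 2⁻¹ * ν {x} := by
  rw [Measure.bind_apply hx P.measurable.aemeasurable]
  have hpt : ∀ y : X, P y {x} = 2⁻¹ * ({x} : Set X).indicator 1 y := by
    intro y
    rw [hlazy y {x} hx, hdens y hπx, Measure.dirac_apply' y hx, mul_zero, zero_add]
  simp_rw [hpt]
  rw [lintegral_const_mul _ (measurable_one.indicator hx), lintegral_indicator_one hx]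

lemma kpow_singleton [IsMarkovKernel P] (hlazy : IsHalfLazy P Pt)
    (hdens : HasDensities Pt π) {x : X} (hπx : π {x} = 0) (hx : MeasurableSet {x})
    (m : ℕ) : kpow P m x {x} = 2⁻¹ ^ m := by
  induction m with
  | zero =>
    simp [kpow, Kernel.id_apply, Measure.dirac_apply' x hx]
  | succ n ih =>
    have : kpow P (n + 1) x = ((kpow P n) x).bind ⇑P := by
      simp [kpow, Kernel.comp_apply]
    rw [this, bind_singleton_eq hlazy hdens hπx hx, ih, pow_succ, mul_comm]

end Atom
section Arith

lemma pow_half_le_ofReal {δ : ℝ} (hδ0 : 0 < δ) (hδ1 : δ < 1) {m : ℕ}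
    (hm : ⌈Real.log (1 / δ) / Real.log 2⌉₊ ≤ m) :
    (2⁻¹ : ℝ≥0∞) ^ m ≤ ENNReal.ofReal δ := by
  have hlog2 : 0 < Real.log 2 := Real.log_pos one_lt_two
  have ham : Real.log (1 / δ) / Real.log 2 ≤ (m : ℝ) :=
    le_trans (Nat.le_ceil _) (Nat.cast_le.2 hm)
  have hlogδ : Real.log (1 / δ) ≤ m * Real.log 2 := by
    rw [div_le_iff₀ hlog2] at ham
    linarith
  have hreal : ((1 : ℝ) / 2) ^ m ≤ δ := by
    have hpowpos : (0 : ℝ) < ((1 : ℝ) / 2) ^ m := by positivity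
    rw [← Real.log_le_log_iff hpowpos hδ0, Real.log_pow, one_div, Real.log_inv]
    rw [one_div, Real.log_inv] at hlogδ
    linarith
  have h2 : (2⁻¹ : ℝ≥0∞) ^ m = ENNReal.ofReal (((1 : ℝ) / 2) ^ m) := by
    rw [ENNReal.ofReal_pow (by norm_num), one_div, ENNReal.ofReal_inv_of_pos (by norm_num)]
    norm_num
  rw [h2]
  exact ENNReal.ofReal_le_ofReal hreal

lemma natCast_two_ceil_le {a : ℝ} (ha : 0 < a) :
    ((2 * ⌈a⌉₊ - 1 : ℕ) : ℝ≥0∞) ≤ ENNReal.ofReal (2 * a + 1) := by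
  have h1 : 1 ≤ ⌈a⌉₊ := Nat.one_le_ceil_iff.2 ha
  rw [← ENNReal.ofReal_natCast]
  refine ENNReal.ofReal_le_ofReal ?_
  have h2 : ((⌈a⌉₊ : ℝ)) < a + 1 := Nat.ceil_lt_add_one ha.le
  have h3 : ((2 * ⌈a⌉₊ - 1 : ℕ) : ℝ) = 2 * (⌈a⌉₊ : ℝ) - 1 := by
    have : (1 : ℕ) ≤ 2 * ⌈a⌉₊ := by omega
    push_cast [Nat.cast_sub this]
    ring
  rw [h3]
  linarith

end Arith
end SpectralProfile



open SpectralProfile MeasureTheory ProbabilityTheory in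
/-- Equation (15): bound of the `δ`-approximate mixing time by the `L²` mixing times
from the starting distributions `δ_x P̃`. -/
theorem stmt11 {X : Type*} [MeasurableSpace X] [TopologicalSpace X] [PolishSpace X]
    [BorelSpace X] (P Pt : Kernel X X) [IsMarkovKernel P] [IsMarkovKernel Pt]
    (π : Measure X) [IsProbabilityMeasure π]
    (hstat : IsStationary π P) (hrev : IsReversible π P)
    (hlazy : IsHalfLazy P Pt) (hdens : HasDensities Pt π)
    (hatomless : ∀ x : X, π {x} = 0)
    (ε δ : ℝ) (hε : ε ∈ Set.Ioo (0 : ℝ) 1) (hδ : δ ∈ Set.Ioo (0 : ℝ) ε) :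
    (mixTimeApprox π P Pt δ ε : ℝ≥0∞) ≤
      max (2 * ⨆ x : X, (mixTime π P ((Measure.dirac x).bind Pt) (ε - δ) : ℝ≥0∞))
        (ENNReal.ofReal (2 * Real.log (1 / δ) / Real.log 2 + 1)) := by
  obtain ⟨hε0, hε1⟩ := hε
  obtain ⟨hδ0, hδε⟩ := hδ
  have hδ1 : δ < 1 := lt_trans hδε hε1
  cases isEmpty_or_nonempty X with
  | inl hX =>
    have h0 : (⨆ x : X, d2delta π P Pt δ x 0) = 0 := by
      rw [iSup_of_empty]; rfl
    have hzero : mixTimeApprox π P Pt δ ε = 0 := by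
      unfold mixTimeApprox
      refine Nat.sInf_eq_zero.2 (Or.inl ?_)
      simp only [Set.mem_setOf_eq, h0]
      exact zero_le
    rw [hzero]
    simp
  | inr hX =>
  have hμprob : ∀ x : X, IsProbabilityMeasure ((Measure.dirac x).bind ⇑Pt) := fun x => by
    rw [Measure.dirac_bind Pt.measurable x]; infer_instance
  have hμac : ∀ x : X, (Measure.dirac x).bind ⇑Pt ≪ π := fun x => by
    rw [Measure.dirac_bind Pt.measurable x]; exact hdens x
  by_cases hne : ∀ x : X,
      {k : ℕ | L2dist (stepDist ((Measure.dirac x).bind ⇑Pt) P k) π ≤ ε - δ}.Nonempty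
  case neg =>
    push_neg at hne
    obtain ⟨x₀, hx₀⟩ := hne
    have hempty : {k : ℕ | (⨆ x : X, d2delta π P Pt δ x k) ≤ ENNReal.ofReal ε} = ∅ := by
      refine Set.eq_empty_iff_forall_notMem.2 fun K hK => ?_
      simp only [Set.mem_setOf_eq] at hK
      have hx := le_trans (le_iSup (fun x => d2delta π P Pt δ x K) x₀) hK
      unfold d2delta at hx
      split_ifs at hx with hcond
      · have hle := (ENNReal.ofReal_le_ofReal_iff hε0.le).1 hx
        refine Set.eq_empty_iff_forall_notMem.1 hx₀ (ceilHalf K) ?_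
        simp only [Set.mem_setOf_eq]
        linarith
      · exact ENNReal.ofReal_ne_top (top_le_iff.1 hx)
    have hzero : mixTimeApprox π P Pt δ ε = 0 := by
      unfold mixTimeApprox
      rw [hempty, Nat.sInf_empty]
    rw [hzero]
    simp
  case pos =>
  have hfmem : ∀ x : X, L2dist (stepDist ((Measure.dirac x).bind ⇑Pt) P
      (mixTime π P ((Measure.dirac x).bind ⇑Pt) (ε - δ))) π ≤ ε - δ :=
    fun x => Nat.sInf_mem (hne x)
  by_cases hbdd : BddAbove (Set.range fun x : X =>
      mixTime π P ((Measure.dirac x).bind ⇑Pt) (ε - δ))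
  case neg =>
    have htop : (⨆ x : X, (mixTime π P ((Measure.dirac x).bind ⇑Pt) (ε - δ) : ℝ≥0∞)) = ⊤ := by
      by_contra hs
      apply hbdd
      obtain ⟨n, hn⟩ := ENNReal.exists_nat_gt hs
      refine ⟨n, ?_⟩
      rintro j ⟨x, rfl⟩
      have h1 : ((mixTime π P ((Measure.dirac x).bind ⇑Pt) (ε - δ) : ℕ) : ℝ≥0∞)
          ≤ ⨆ x : X, (mixTime π P ((Measure.dirac x).bind ⇑Pt) (ε - δ) : ℝ≥0∞) :=
        le_iSup (fun x : X => (mixTime π P ((Measure.dirac x).bind ⇑Pt) (ε - δ) : ℝ≥0∞)) x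
      have h2 := lt_of_le_of_lt h1 hn
      exact_mod_cast h2.le
    refine le_trans le_top ?_
    have h3 : (2 : ℝ≥0∞) * ⨆ x : X, (mixTime π P ((Measure.dirac x).bind ⇑Pt) (ε - δ) : ℝ≥0∞)
        = ⊤ := by
      rw [htop]
      exact ENNReal.mul_top (by norm_num)
    rw [← h3]
    exact le_max_left _ _
  case pos =>
  have hmemN := Nat.sSup_mem (Set.range_nonempty _) hbdd
  rw [sSup_range] at hmemN
  obtain ⟨x₀, hx₀⟩ := hmemN
  set N : ℕ := ⨆ x : X, mixTime π P ((Measure.dirac x).bind ⇑Pt) (ε - δ) with hNdef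
  have hfle : ∀ x : X, mixTime π P ((Measure.dirac x).bind ⇑Pt) (ε - δ) ≤ N :=
    fun x => le_ciSup hbdd x
  have hlogδ : 0 < Real.log (1 / δ) := by
    refine Real.log_pos ?_
    rw [lt_div_iff₀ hδ0]
    linarith
  have ha0 : 0 < Real.log (1 / δ) / Real.log 2 :=
    div_pos hlogδ (Real.log_pos one_lt_two)
  set m0 : ℕ := ⌈Real.log (1 / δ) / Real.log 2⌉₊ with hm0def
  have hm01 : 1 ≤ m0 := Nat.one_le_ceil_iff.2 ha0
  set K : ℕ := max (2 * N) (2 * m0 - 1) with hKdef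
  have hmN : N ≤ ceilHalf K := by simp only [ceilHalf, hKdef]; omega
  have hmm0 : m0 ≤ ceilHalf K := by simp only [ceilHalf, hKdef]; omega
  have hKmem : K ∈ {k : ℕ | (⨆ x : X, d2delta π P Pt δ x k) ≤ ENNReal.ofReal ε} := by
    simp only [Set.mem_setOf_eq]
    refine iSup_le fun x => ?_
    have hcond : kpow P (ceilHalf K) x {x} ≤ ENNReal.ofReal δ := by
      rw [kpow_singleton hlazy hdens (hatomless x) (measurableSet_singleton x)]
      exact pow_half_le_ofReal hδ0 hδ1 hmm0
    haveI := hμprob x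
    have hL2 : L2dist (stepDist ((Measure.dirac x).bind ⇑Pt) P (ceilHalf K)) π ≤ ε - δ :=
      L2dist_stepDist_mono hstat hrev hlazy (hμac x) (by linarith)
        ((hfle x).trans hmN) (hfmem x)
    unfold d2delta
    rw [if_pos hcond]
    exact ENNReal.ofReal_le_ofReal (by linarith)
  have hKle : mixTimeApprox π P Pt δ ε ≤ K := Nat.sInf_le hKmem
  calc ((mixTimeApprox π P Pt δ ε : ℕ) : ℝ≥0∞) ≤ (K : ℝ≥0∞) := Nat.cast_le.2 hKle
    _ ≤ _ := by
      rw [hKdef, Nat.mono_cast.map_max]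
      refine max_le_max ?_ ?_
      · push_cast
        have hNle : ((N : ℕ) : ℝ≥0∞)
            ≤ ⨆ x : X, (mixTime π P ((Measure.dirac x).bind ⇑Pt) (ε - δ) : ℝ≥0∞) := by
          rw [← hx₀]
          exact le_iSup (fun x : X =>
            (mixTime π P ((Measure.dirac x).bind ⇑Pt) (ε - δ) : ℝ≥0∞)) x₀
        calc (2 : ℝ≥0∞) * (N : ℝ≥0∞) ≤ 2 * ⨆ x : X,
              (mixTime π P ((Measure.dirac x).bind ⇑Pt) (ε - δ) : ℝ≥0∞) := by
              exact mul_le_mul_right hNle 2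
          _ = _ := rfl
      · have := natCast_two_ceil_le ha0
        rw [← hm0def] at this
        calc ((2 * m0 - 1 : ℕ) : ℝ≥0∞) ≤ ENNReal.ofReal
              (2 * (Real.log (1 / δ) / Real.log 2) + 1) := this
          _ = ENNReal.ofReal (2 * Real.log (1 / δ) / Real.log 2 + 1) := by
              rw [mul_div_assoc]
end
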